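/- Let δ > 0, r ≥ 1, and let G be an r×r symmetric positive semidefinite matrix with diag(G) = e and 0 ≤ G(i,j) ≤ 1 for all i,j. Then log det(G + δI) ≥ log((r+δ)·δ^{r-1}), with equality if and only if G = ee^T (the all-ones matrix). -/

import Mathlib

open Matrix

lemma prod_key_stmt7 (δ : ℝ) (hδ : 0 < δ) {ι : Type*} (x : ι → ℝ) (s : Finset ι)
    (hs : s.Nonempty) :
    (∀ i ∈ s, 0 ≤ x i) →
    δ ^ (s.card - 1) * ((∑ i ∈ s, x i) + δ) ≤ ∏ i ∈ s, (x i + δ) ∧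
      ((∏ i ∈ s, (x i + δ)) = δ ^ (s.card - 1) * ((∑ i ∈ s, x i) + δ) →
        ∀ i ∈ s, ∀ j ∈ s, i ≠ j → x i * x j = 0) := by
  induction hs using Finset.Nonempty.cons_induction with
  | singleton a =>
      intro _
      refine ⟨by simp, ?_⟩
      intro _ i hi j hj hij
      simp only [Finset.mem_singleton] at hi hj
      exact absurd (hi.trans hj.symm) hij
  | cons a t ha ht ih =>
      intro hx
      have hxa : 0 ≤ x a := hx a (Finset.mem_cons_self a t)
      have hxt : ∀ i ∈ t, 0 ≤ x i := fun i hi => hx i (Finset.mem_cons_of_mem hi)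
      obtain ⟨hle, heq⟩ := ih hxt
      have hS : 0 ≤ ∑ i ∈ t, x i := Finset.sum_nonneg hxt
      have hcard : t.card - 1 + 1 = t.card := Nat.succ_pred_eq_of_pos ht.card_pos
      have hA : 0 < δ ^ (t.card - 1) := pow_pos hδ _
      rw [Finset.prod_cons, Finset.sum_cons, Finset.card_cons, Nat.add_sub_cancel, ← hcard,
        pow_succ]
      constructor
      · nlinarith [mul_nonneg hxa hS,
          mul_le_mul_of_nonneg_left hle (by linarith : (0:ℝ) ≤ x a + δ)]
      · intro hEq
        have hxas : x a * ∑ i ∈ t, x i = 0 := by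
          have h1 := mul_le_mul_of_nonneg_left hle (by linarith : (0:ℝ) ≤ x a + δ)
          have h2 : x a * ∑ i ∈ t, x i ≤ 0 := by nlinarith
          exact le_antisymm h2 (mul_nonneg hxa hS)
        have hP : ∏ i ∈ t, (x i + δ) = δ ^ (t.card - 1) * ((∑ i ∈ t, x i) + δ) := by
          have hpos : (0:ℝ) < x a + δ := by linarith
          apply mul_left_cancel₀ hpos.ne'
          rw [hEq]; ring_nf
          nlinarith [hxas]
        have hpair := heq hP
        intro i hi j hj hij
        rcases Finset.mem_cons.mp hi with rfl | hi'
        · rcases Finset.mem_cons.mp hj with rfl | hj'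
          · exact absurd rfl hij
          · rcases mul_eq_zero.mp hxas with h | h
            · rw [h, zero_mul]
            · rw [(Finset.sum_eq_zero_iff_of_nonneg hxt).mp h j hj', mul_zero]
        · rcases Finset.mem_cons.mp hj with rfl | hj'
          · rcases mul_eq_zero.mp hxas with h | h
            · rw [h, mul_zero]
            · rw [(Finset.sum_eq_zero_iff_of_nonneg hxt).mp h i hi', zero_mul]
          · exact hpair i hi' j hj' hij

lemma spectral_key_stmt7 {r : ℕ} (δ : ℝ) (G : Matrix (Fin r) (Fin r) ℝ) (hG : G.PosSemidef) :
    (G + δ • (1 : Matrix (Fin r) (Fin r) ℝ)).det = ∏ i, (hG.1.eigenvalues i + δ) ∧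
    G.trace = ∑ i, hG.1.eigenvalues i ∧
    (G * G).trace = ∑ i, hG.1.eigenvalues i ^ 2 := by
  set U : Matrix (Fin r) (Fin r) ℝ := (hG.1.eigenvectorUnitary : Matrix (Fin r) (Fin r) ℝ)
    with hUdef
  set D : Matrix (Fin r) (Fin r) ℝ := diagonal hG.1.eigenvalues with hD
  have hspec : G = U * D * star U := by
    have := hG.1.spectral_theorem
    simpa [hD] using this
  have hU : U * star U = 1 := mem_unitaryGroup_iff.mp hG.1.eigenvectorUnitary.2
  have hU' : star U * U = 1 := mem_unitaryGroup_iff'.mp hG.1.eigenvectorUnitary.2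
  refine ⟨?_, ?_, ?_⟩
  · have h1 : G + δ • 1 = U * (D + δ • 1) * star U := by
      rw [Matrix.mul_add, Matrix.add_mul, ← hspec]
      congr 1
      rw [Matrix.mul_smul, Matrix.mul_one, Matrix.smul_mul, hU]
    rw [h1, det_mul_right_comm, hU, Matrix.one_mul, hD, smul_one_eq_diagonal, diagonal_add,
      det_diagonal]
  · conv_lhs => rw [hspec]
    rw [trace_mul_cycle, hU', Matrix.one_mul, hD, trace_diagonal]
  · have h2 : G * G = U * (D * D) * star U := by
      conv_lhs => rw [hspec]
      calc U * D * star U * (U * D * star U) = U * D * (star U * U) * (D * star U) := by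
            simp only [Matrix.mul_assoc]
        _ = U * (D * D) * star U := by rw [hU']; simp only [Matrix.mul_one, Matrix.mul_assoc]
    rw [h2, trace_mul_cycle, hU', Matrix.one_mul, hD, diagonal_mul_diagonal, trace_diagonal]
    simp [sq]

lemma detJ_stmt7 {r : ℕ} (hr : 1 ≤ r) (δ : ℝ) (hδ : 0 < δ) :
    ((Matrix.of (fun _ _ => (1:ℝ)) : Matrix (Fin r) (Fin r) ℝ) + δ • 1).det
      = (r + δ) * δ ^ (r - 1) := by
  have hJ : (Matrix.of (fun _ _ => (1:ℝ)) : Matrix (Fin r) (Fin r) ℝ)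
      = δ • ((replicateCol (Fin 1) (fun (_ : Fin r) => δ⁻¹)) * (replicateRow (Fin 1) (fun (_ : Fin r) => (1:ℝ)))) := by
    ext i j
    simp [Matrix.mul_apply, mul_inv_cancel₀ hδ.ne']
  have key : (Matrix.of (fun _ _ => (1:ℝ)) : Matrix (Fin r) (Fin r) ℝ) + δ • 1
      = δ • (1 + (replicateCol (Fin 1) (fun (_ : Fin r) => δ⁻¹)) * (replicateRow (Fin 1) (fun (_ : Fin r) => (1:ℝ)))) := by
    rw [smul_add, ← hJ, add_comm]
  rw [key, det_smul]
  erw [det_one_add_replicateCol_mul_replicateRow (ι := Fin 1) (fun (_ : Fin r) => δ⁻¹)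
    (fun (_ : Fin r) => (1:ℝ))]
  have : (fun (_ : Fin r) => (1:ℝ)) ⬝ᵥ (fun (_ : Fin r) => δ⁻¹) = r * δ⁻¹ := by
    simp [dotProduct]
  rw [this, Fintype.card_fin]
  have hrr : δ ^ r = δ ^ (r - 1) * δ := by
    conv_lhs => rw [← Nat.succ_pred_eq_of_pos hr]
    rw [pow_succ]; rfl
  rw [hrr]
  field_simp
  ring

theorem stmt7 {r : ℕ} (hr : 1 ≤ r) (δ : ℝ) (hδ : 0 < δ)
    (G : Matrix (Fin r) (Fin r) ℝ) (hG : G.PosSemidef)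
    (hdiag : ∀ i, G i i = 1)
    (hrange : ∀ i j, 0 ≤ G i j ∧ G i j ≤ 1) :
    Real.log ((r + δ) * δ ^ (r - 1)) ≤ Real.log (G + δ • (1 : Matrix (Fin r) (Fin r) ℝ)).det ∧
      (Real.log (G + δ • (1 : Matrix (Fin r) (Fin r) ℝ)).det = Real.log ((r + δ) * δ ^ (r - 1)) ↔
        G = Matrix.of (fun _ _ => (1 : ℝ))) := by
  have hι : Nonempty (Fin r) := Fin.pos_iff_nonempty.mp (by omega)
  obtain ⟨hdet, htr, htr2⟩ := spectral_key_stmt7 δ G hG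
  set lam : Fin r → ℝ := hG.1.eigenvalues with hlam
  have hlnn : ∀ i, 0 ≤ lam i := hG.eigenvalues_nonneg
  have htrval : G.trace = (r : ℝ) := by
    simp [Matrix.trace, Matrix.diag, hdiag]
  have hsum : ∑ i, lam i = (r : ℝ) := by rw [← htr, htrval]
  have hcard : (Finset.univ : Finset (Fin r)).card = r := by
    rw [Finset.card_univ, Fintype.card_fin]
  obtain ⟨hle, heqc⟩ := prod_key_stmt7 δ hδ lam Finset.univ Finset.univ_nonempty
    (fun i _ => hlnn i)
  rw [hcard, hsum] at hle heqc
  have hrpos : (0:ℝ) < (r:ℝ) + δ := by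
    have : (1:ℝ) ≤ (r:ℝ) := by exact_mod_cast hr
    linarith
  have hcpos : (0:ℝ) < ((r:ℝ) + δ) * δ ^ (r - 1) :=
    mul_pos hrpos (pow_pos hδ _)
  have hle' : ((r:ℝ) + δ) * δ ^ (r - 1) ≤ (G + δ • (1 : Matrix (Fin r) (Fin r) ℝ)).det := by
    rw [hdet]
    calc ((r:ℝ) + δ) * δ ^ (r - 1) = δ ^ (r - 1) * (((r:ℝ)) + δ) := by ring
      _ ≤ _ := hle
  have hdpos : (0:ℝ) < (G + δ • (1 : Matrix (Fin r) (Fin r) ℝ)).det :=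
    lt_of_lt_of_le hcpos hle'
  constructor
  · exact Real.log_le_log hcpos hle'
  constructor
  · intro h
    have hdet_eq : (G + δ • (1 : Matrix (Fin r) (Fin r) ℝ)).det = ((r:ℝ) + δ) * δ ^ (r - 1) :=
      Real.log_injOn_pos (Set.mem_Ioi.mpr hdpos) (Set.mem_Ioi.mpr hcpos) h
    have hprod : (∏ i, (lam i + δ)) = δ ^ (r - 1) * (((r:ℝ)) + δ) := by
      rw [← hdet, hdet_eq]; ring
    have hpair := heqc hprod
    have hsumsq : ∑ i, lam i ^ 2 = (r:ℝ) ^ 2 := by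
      have expand : (∑ i, lam i) * (∑ j, lam j) = ∑ i, ∑ j, lam i * lam j :=
        Finset.sum_mul_sum _ _ _ _
      have diag : ∀ i : Fin r, ∑ j, lam i * lam j = lam i ^ 2 := by
        intro i
        rw [Finset.sum_eq_single i]
        · ring
        · intro b _ hb
          exact hpair i (Finset.mem_univ i) b (Finset.mem_univ b) (Ne.symm hb)
        · intro hi; exact absurd (Finset.mem_univ i) hi
      calc ∑ i, lam i ^ 2 = ∑ i, ∑ j, lam i * lam j := by
            exact Finset.sum_congr rfl fun i _ => (diag i).symm
        _ = (∑ i, lam i) * (∑ j, lam j) := expand.symm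
        _ = (r:ℝ) ^ 2 := by rw [hsum]; ring
    have hsym : ∀ i j, G j i = G i j := by
      intro i j
      have := congrFun (congrFun hG.1 j) i
      rw [Matrix.conjTranspose_apply] at this
      simpa using this.symm
    have htrGG : (G * G).trace = ∑ i, ∑ j, G i j ^ 2 := by
      rw [Matrix.trace]
      refine Finset.sum_congr rfl fun i _ => ?_
      rw [Matrix.diag_apply, Matrix.mul_apply]
      exact Finset.sum_congr rfl fun j _ => by rw [hsym i j]; ring
    have hGG : ∑ i, ∑ j, G i j ^ 2 = (r:ℝ) ^ 2 := by
      rw [← htrGG, htr2, hsumsq]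
    have hzero : ∑ i : Fin r, ∑ j : Fin r, ((1:ℝ) - G i j ^ 2) = 0 := by
      have h1 : ∑ i : Fin r, ∑ j : Fin r, ((1:ℝ) - G i j ^ 2)
          = (∑ i : Fin r, ∑ j : Fin r, (1:ℝ)) - ∑ i, ∑ j, G i j ^ 2 := by
        rw [← Finset.sum_sub_distrib]
        exact Finset.sum_congr rfl fun i _ => by rw [← Finset.sum_sub_distrib]
      rw [h1, hGG]
      simp [Finset.card_univ]
      ring
    have hterm : ∀ i j, (1:ℝ) - G i j ^ 2 = 0 := by
      intro i j
      have hnn : ∀ a : Fin r, ∀ b : Fin r, (0:ℝ) ≤ 1 - G a b ^ 2 := by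
        intro a b
        obtain ⟨h0, h1⟩ := hrange a b
        nlinarith
      have houter := (Finset.sum_eq_zero_iff_of_nonneg
        (fun a _ => Finset.sum_nonneg fun b _ => hnn a b)).mp hzero i (Finset.mem_univ i)
      exact (Finset.sum_eq_zero_iff_of_nonneg (fun b _ => hnn i b)).mp houter j
        (Finset.mem_univ j)
    ext i j
    obtain ⟨h0, _⟩ := hrange i j
    have hsq : G i j ^ 2 = 1 := by have := hterm i j; linarith
    have hfac : (1 - G i j) * (1 + G i j) = 0 := by linear_combination -hsq
    rcases mul_eq_zero.mp hfac with h | h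
    · show G i j = Matrix.of (fun _ _ => (1:ℝ)) i j
      simp only [Matrix.of_apply]
      linarith
    · exfalso; linarith
  · intro h
    rw [h, detJ_stmt7 hr δ hδ]
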